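/- (One-step decrease, regime p6.) Let f1 ∈ F_{μ1,L1} and f2 ∈ F_{μ2,L2} with μ2 > −μ1 > 0, L2 > μ1, μ1 < L1, μ2 < L2, L1 > 0, and max{ (1/L2)·(2 + L1/μ1), 0 } < 1/μ1 + 1/μ2 + 1/L1. Let F := f1 − f2 and consider a DCA step from x to x⁺ with g2 ∈ ∂f2(x), g1⁺ ∈ ∂f1(x⁺), g1⁺ = g2, and let g1 ∈ ∂f1(x). Then F(x) − F(x⁺) ≥ ((μ1 + μ2)/μ1²)·(1/2)‖g1 − g2‖². -/

import Mathlib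

open RealInnerProductSpace

variable {H : Type*} [NormedAddCommGroup H] [InnerProductSpace ℝ H]

/-- `f` has lower curvature `μ`, i.e. `f - (μ/2)‖·‖²` is convex. -/
def HasLowerCurvature (μ : ℝ) (f : H → ℝ) : Prop :=
  ConvexOn ℝ Set.univ fun x => f x - μ / 2 * ‖x‖ ^ 2

/-- `f` has upper curvature `L`, i.e. `(L/2)‖·‖² - f` is convex. -/
def HasUpperCurvature (L : ℝ) (f : H → ℝ) : Prop :=
  ConvexOn ℝ Set.univ fun x => L / 2 * ‖x‖ ^ 2 - f x

/-- `g` is a subgradient of `f` (of lower curvature `μ`) at `x`. -/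
def IsSubgradient (μ : ℝ) (f : H → ℝ) (x g : H) : Prop :=
  ∀ y, f y ≥ f x + ⟪g, y - x⟫ + μ / 2 * ‖y - x‖ ^ 2


lemma descent_lemma {L μ : ℝ} {f : H → ℝ} (hup : HasUpperCurvature L f)
    {x g : H} (hg : IsSubgradient μ f x g) (hμL : μ < L) (z : H) :
    f z ≤ f x + ⟪g, z - x⟫ + L / 2 * ‖z - x‖ ^ 2 := by
  have key : ∀ τ : ℝ, 0 < τ →
      f z ≤ f x + ⟪g, z - x⟫ + L / 2 * ‖z - x‖ ^ 2 + τ * ((L - μ) / 2 * ‖z - x‖ ^ 2) := by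
    intro τ hτ
    have h1τ : (0:ℝ) < 1 + τ := by linarith
    set b : H := x + τ • (x - z) with hbdef
    have hθ0 : (0:ℝ) ≤ τ / (1 + τ) := by positivity
    have hθ1 : (0:ℝ) ≤ 1 / (1 + τ) := by positivity
    have hθs : τ / (1 + τ) + 1 / (1 + τ) = 1 := by field_simp; ring
    have hcomb : (τ / (1 + τ)) • z + (1 / (1 + τ)) • b = x := by
      rw [hbdef]
      match_scalars <;> field_simp <;> ring
    have hconv := hup.2 (Set.mem_univ z) (Set.mem_univ b) hθ0 hθ1 hθs
    rw [hcomb] at hconv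
    simp only [smul_eq_mul] at hconv
    have hsub := hg b
    have hbx : b - x = τ • (x - z) := by rw [hbdef]; abel
    have e1 : ⟪g, b - x⟫ = τ * ⟪g, x - z⟫ := by rw [hbx, real_inner_smul_right]
    have e2 : ‖b - x‖ ^ 2 = τ ^ 2 * ‖x - z‖ ^ 2 := by
      rw [hbx, norm_smul, mul_pow, Real.norm_eq_abs, sq_abs]
    have e3 : ‖b‖ ^ 2 = ‖x‖ ^ 2 + 2 * (τ * ⟪x, x - z⟫) + τ ^ 2 * ‖x - z‖ ^ 2 := by
      rw [hbdef, norm_add_sq_real, real_inner_smul_right, norm_smul, mul_pow,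
        Real.norm_eq_abs, sq_abs]
    have e4 : ‖x - z‖ ^ 2 = ‖x‖ ^ 2 - 2 * ⟪x, z⟫ + ‖z‖ ^ 2 := norm_sub_sq_real x z
    have e5 : ⟪x, x - z⟫ = ‖x‖ ^ 2 - ⟪x, z⟫ := by
      rw [inner_sub_right, real_inner_self_eq_norm_sq]
    have e6 : ⟪g, z - x⟫ = -⟪g, x - z⟫ := by rw [← inner_neg_right, neg_sub]
    have e7 : ‖z - x‖ = ‖x - z‖ := norm_sub_rev z x
    rw [e1, e2] at hsub
    have hconv2 : (1 + τ) * (L / 2 * ‖x‖ ^ 2 - f x) ≤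
        τ * (L / 2 * ‖z‖ ^ 2 - f z) + (L / 2 * ‖b‖ ^ 2 - f b) := by
      have h2 := mul_le_mul_of_nonneg_left hconv h1τ.le
      have heq : (1 + τ) * (τ / (1 + τ) * (L / 2 * ‖z‖ ^ 2 - f z)
          + 1 / (1 + τ) * (L / 2 * ‖b‖ ^ 2 - f b))
          = τ * (L / 2 * ‖z‖ ^ 2 - f z) + (L / 2 * ‖b‖ ^ 2 - f b) := by
        field_simp
      linarith [heq ▸ h2]
    rw [e3, e5] at hconv2
    have e4' : L * (τ * ‖x - z‖ ^ 2) = L * (τ * (‖x‖ ^ 2 - 2 * ⟪x, z⟫ + ‖z‖ ^ 2)) := by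
      rw [e4]
    have final : τ * f z ≤ τ * (f x + ⟪g, z - x⟫ + L / 2 * ‖z - x‖ ^ 2
        + τ * ((L - μ) / 2 * ‖z - x‖ ^ 2)) := by
      rw [e6, e7]
      nlinarith [hconv2, hsub, e4']
    exact le_of_mul_le_mul_left final hτ
  by_cases hz : z = x
  · subst hz; simp
  · have hzx : z - x ≠ 0 := sub_ne_zero.mpr hz
    have hnz : 0 < ‖z - x‖ := norm_pos_iff.mpr hzx
    have hS : 0 < ‖z - x‖ ^ 2 := by positivity
    have hN : 0 < L - μ := by linarith
    have hK : 0 < (L - μ) / 2 * ‖z - x‖ ^ 2 := by positivity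
    refine le_of_forall_pos_le_add fun ε hε => ?_
    have hτ : 0 < ε / ((L - μ) / 2 * ‖z - x‖ ^ 2) := by positivity
    have h := key _ hτ
    have hc : ε / ((L - μ) / 2 * ‖z - x‖ ^ 2) * ((L - μ) / 2 * ‖z - x‖ ^ 2) = ε :=
      div_mul_cancel₀ ε (ne_of_gt hK)
    linarith

lemma interp_lemma {μ L : ℝ} {f : H → ℝ} (hup : HasUpperCurvature L f) (hμL : μ < L)
    (x y gx gy : H) (hgx : IsSubgradient μ f x gx) (hgy : IsSubgradient μ f y gy) :
    f x ≥ f y + ⟪gy, x - y⟫ + μ / 2 * ‖x - y‖ ^ 2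
      + 1 / (2 * (L - μ)) * ‖gx - gy - μ • (x - y)‖ ^ 2 := by
  have hN : 0 < L - μ := by linarith
  have hNne : L - μ ≠ 0 := ne_of_gt hN
  set v : H := gx - gy - μ • (x - y) with hvdef
  set z : H := x - (L - μ)⁻¹ • v with hzdef
  have h1 := hgy z
  have h2 := descent_lemma hup hgx hμL z
  have hzx : z - x = -((L - μ)⁻¹ • v) := by rw [hzdef]; abel
  have hzy : z - y = (x - y) - (L - μ)⁻¹ • v := by rw [hzdef]; abel
  have e1 : ⟪gy, z - y⟫ = ⟪gy, x - y⟫ - (L - μ)⁻¹ * ⟪gy, v⟫ := by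
    rw [hzy, inner_sub_right, real_inner_smul_right]
  have e2 : ‖z - y‖ ^ 2 = ‖x - y‖ ^ 2 - 2 * ((L - μ)⁻¹ * ⟪x - y, v⟫)
      + ((L - μ)⁻¹) ^ 2 * ‖v‖ ^ 2 := by
    rw [hzy, norm_sub_sq_real, real_inner_smul_right, norm_smul, mul_pow,
      Real.norm_eq_abs, sq_abs]
  have e3 : ⟪gx, z - x⟫ = -((L - μ)⁻¹ * ⟪gx, v⟫) := by
    rw [hzx, inner_neg_right, real_inner_smul_right]
  have e4 : ‖z - x‖ ^ 2 = ((L - μ)⁻¹) ^ 2 * ‖v‖ ^ 2 := by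
    rw [hzx, norm_neg, norm_smul, mul_pow, Real.norm_eq_abs, sq_abs]
  have e5 : (L - μ)⁻¹ * ⟪gx, v⟫ - (L - μ)⁻¹ * ⟪gy, v⟫ - (L - μ)⁻¹ * (μ * ⟪x - y, v⟫)
      = (L - μ)⁻¹ * ‖v‖ ^ 2 := by
    have h : ⟪gx - gy - μ • (x - y), v⟫ = ⟪gx, v⟫ - ⟪gy, v⟫ - μ * ⟪x - y, v⟫ := by
      rw [inner_sub_left, inner_sub_left, real_inner_smul_left]
    have h2 : ⟪v, v⟫ = ‖v‖ ^ 2 := real_inner_self_eq_norm_sq v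
    rw [hvdef] at h2
    rw [h] at h2
    rw [← h2]; ring
  have eC : L / 2 * (((L - μ)⁻¹) ^ 2 * ‖v‖ ^ 2) - μ / 2 * (((L - μ)⁻¹) ^ 2 * ‖v‖ ^ 2)
      = 1 / (2 * (L - μ)) * ‖v‖ ^ 2 := by
    field_simp
  rw [e1, e2] at h1
  rw [e3, e4] at h2
  have eD : 1 / (2 * (L - μ)) * ‖v‖ ^ 2 + 1 / (2 * (L - μ)) * ‖v‖ ^ 2
      = (L - μ)⁻¹ * ‖v‖ ^ 2 := by field_simp; ring
  linarith [h1, h2, e5, eC, eD]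


set_option maxHeartbeats 1600000 in
/-- one-step decrease, regime p6. -/
theorem dca_one_step_p6
    (mu1 mu2 L1 L2 : ℝ)
    (h1 : -mu1 < mu2) (h2 : 0 < -mu1) (h3 : mu1 < L2)
    (h4 : mu1 < L1) (h5 : mu2 < L2) (h6 : 0 < L1)
    (h7 : max ((1 / L2) * (2 + L1 / mu1)) 0 < 1 / mu1 + 1 / mu2 + 1 / L1)
    (f1 f2 : H → ℝ)
    (h1lo : HasLowerCurvature mu1 f1) (h1up : HasUpperCurvature L1 f1)
    (h2lo : HasLowerCurvature mu2 f2) (h2up : HasUpperCurvature L2 f2)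
    (x xp g1 g2 : H)
    (hg2 : IsSubgradient mu2 f2 x g2) (hg1p : IsSubgradient mu1 f1 xp g2)
    (hg1 : IsSubgradient mu1 f1 x g1) :
    (f1 x - f2 x) - (f1 xp - f2 xp) ≥
      (mu1 + mu2) / mu1 ^ 2 * ((1 : ℝ) / 2) * ‖g1 - g2‖ ^ 2 := by
  have hmu1neg : mu1 < 0 := by linarith
  have hmu1ne : mu1 ≠ 0 := ne_of_lt hmu1neg
  have hmu2pos : 0 < mu2 := by linarith
  have hMpos : 0 < L1 - mu1 := by linarith
  have hMne : L1 - mu1 ≠ 0 := ne_of_gt hMpos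
  have P := interp_lemma h1up h4 x xp g1 g2 hg1 hg1p
  have Q := interp_lemma h1up h4 xp x g2 g1 hg1p hg1
  have R := hg2 xp
  have r1 : ⟪g1, xp - x⟫ = -⟪g1, x - xp⟫ := by rw [← inner_neg_right, neg_sub]
  have r2 : ⟪g2, xp - x⟫ = -⟪g2, x - xp⟫ := by rw [← inner_neg_right, neg_sub]
  have r3 : ‖xp - x‖ = ‖x - xp‖ := norm_sub_rev xp x
  have r4 : g2 - g1 - mu1 • (xp - x) = -(g1 - g2 - mu1 • (x - xp)) := by module
  have r5 : ‖g2 - g1 - mu1 • (xp - x)‖ = ‖g1 - g2 - mu1 • (x - xp)‖ := by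
    rw [r4, norm_neg]
  rw [r1, r3, r5] at Q
  rw [r2, r3] at R
  have hV : ‖g1 - g2 - mu1 • (x - xp)‖ ^ 2
      = ‖g1 - g2‖ ^ 2 - 2 * mu1 * ⟪g1 - g2, x - xp⟫ + mu1 ^ 2 * ‖x - xp‖ ^ 2 := by
    rw [norm_sub_sq_real, real_inner_smul_right, norm_smul, mul_pow,
      Real.norm_eq_abs, sq_abs]
    ring
  rw [hV] at P Q
  have hb : ⟪g1 - g2, x - xp⟫ = ⟪g1, x - xp⟫ - ⟪g2, x - xp⟫ := inner_sub_left g1 g2 (x - xp)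
  obtain ⟨q, hqdef⟩ : ∃ q : ℝ, q = -(mu1 + mu2) / mu1 := ⟨_, rfl⟩
  obtain ⟨α, hadef⟩ : ∃ a : ℝ,
      a = -(mu1 * mu2 + L1 * mu1 + L1 * mu2) / (2 * mu1 ^ 2 * (L1 - mu1)) := ⟨_, rfl⟩
  have hq : 0 ≤ q := by
    rw [hqdef]
    exact div_nonneg_of_nonpos (by linarith) (le_of_lt hmu1neg)
  have h1q : 0 ≤ 1 + q := by linarith
  have hsum : 0 < 1 / mu1 + 1 / mu2 + 1 / L1 := lt_of_le_of_lt (le_max_right _ 0) h7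
  have hL1ne : L1 ≠ 0 := ne_of_gt h6
  have hmu2ne : mu2 ≠ 0 := ne_of_gt hmu2pos
  have hid : (1 / mu1 + 1 / mu2 + 1 / L1) * (-mu1 * mu2 * L1)
      = -(mu2 * L1 + mu1 * L1 + mu1 * mu2) := by field_simp
  have hprod : 0 < -mu1 * mu2 * L1 := mul_pos (mul_pos h2 hmu2pos) h6
  have hnum : mu1 * mu2 + L1 * mu1 + L1 * mu2 < 0 := by
    have hmp := mul_pos hsum hprod
    rw [hid] at hmp
    linarith
  have hmu1sq : 0 < mu1 ^ 2 := by nlinarith [mul_pos h2 h2]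
  have hden : 0 < 2 * mu1 ^ 2 * (L1 - mu1) := by
    have h2m : 0 < 2 * mu1 ^ 2 := by linarith
    exact mul_pos h2m hMpos
  have hα : 0 ≤ α := by
    rw [hadef]
    exact div_nonneg (by linarith) (le_of_lt hden)
  have hVnn : 0 ≤ ‖g1 - g2‖ ^ 2 - 2 * mu1 * ⟪g1 - g2, x - xp⟫
      + mu1 ^ 2 * ‖x - xp‖ ^ 2 := by rw [← hV]; positivity
  have hαV : 0 ≤ α * (‖g1 - g2‖ ^ 2 - 2 * mu1 * ⟪g1 - g2, x - xp⟫
      + mu1 ^ 2 * ‖x - xp‖ ^ 2) := mul_nonneg hα hVnn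
  have hkey : (1 + 2 * q) * (mu1 / 2 * ‖x - xp‖ ^ 2
        + 1 / (2 * (L1 - mu1)) * (‖g1 - g2‖ ^ 2 - 2 * mu1 * ⟪g1 - g2, x - xp⟫
          + mu1 ^ 2 * ‖x - xp‖ ^ 2))
        + mu2 / 2 * ‖x - xp‖ ^ 2 - q * ⟪g1 - g2, x - xp⟫
      = (mu1 + mu2) / mu1 ^ 2 * ((1 : ℝ) / 2) * ‖g1 - g2‖ ^ 2
        + α * (‖g1 - g2‖ ^ 2 - 2 * mu1 * ⟪g1 - g2, x - xp⟫
          + mu1 ^ 2 * ‖x - xp‖ ^ 2) := by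
    rw [hqdef, hadef]
    field_simp
    ring
  have hP2 := mul_le_mul_of_nonneg_left P h1q
  have hQ2 := mul_le_mul_of_nonneg_left Q hq
  have hb' : q * ⟪g1 - g2, x - xp⟫ = q * ⟪g1, x - xp⟫ - q * ⟪g2, x - xp⟫ := by
    rw [hb]; ring
  linarith [hP2, hQ2, R, hkey, hαV, hb, hb']
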